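/- Correctness of the binary-search test when the gain estimate is too large: fix a reference state s* ∈ S and let S' = S \ {s*}; for ρ̂ ∈ ℝ define the S' × S' matrix A(ρ̂) by A(ρ̂)(s, s') = exp(η·(R(s) − ρ̂))·P s s' and the vector c(ρ̂) by c(ρ̂)(s) = exp(η·(R(s) − ρ̂))·P s s*. Suppose z : S → ℝ satisfies z(s) ≥ 0 for all s, z(s*) = 1, and the eigenvalue equation exp(η·ρ)·z(s) = exp(η·R(s))·∑_{s'∈S} P s s' · z(s') for all s ∈ S, for some ρ ∈ ℝ. Then for any ρ̂ > ρ: the series ẑ(s) := ∑_{n=0}^∞ (A(ρ̂)^n · c(ρ̂))(s) converges for every s ∈ S', satisfies ẑ(s) ≤ z(s) for all s ∈ S', and the strict inequality exp(η·ρ̂) > exp(η·R(s*))·(∑_{s∈S'} P s* s · ẑ(s) + P s* s*) holds. -/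

import Mathlib

open Matrix

lemma sum_split_ne {S : Type*} [Fintype S] [DecidableEq S] (a : S) (f : S → ℝ) :
    ∑ s, f s = f a + ∑ s : {s : S // s ≠ a}, f s := by
  rw [Fintype.sum_eq_add_sum_compl a f]
  congr 1
  exact Finset.sum_subtype ({a}ᶜ : Finset S) (fun x => by simp) f

/-- Correctness of the binary-search test when the gain estimate is too large:
if `z ≥ 0` with `z s* = 1` satisfies the eigenvalue equation with gain `ρ`, and
`ρ̂ > ρ`, then the Neumann series defining the first-exit value `ẑ` on
`S' = S \ {s*}` converges, is bounded above by `z`, and the binary-search test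
quantity is strictly smaller than `exp (η ρ̂)`. -/
theorem binary_search_test_gain_too_large
    {S : Type*} [Fintype S] [Nonempty S] [DecidableEq S]
    (P : S → S → ℝ) (hP0 : ∀ s s', 0 ≤ P s s') (hP1 : ∀ s, ∑ s', P s s' = 1)
    (R : S → ℝ) (η : ℝ) (hη : 0 < η)
    (sstar : S)
    (A : ℝ → Matrix {s : S // s ≠ sstar} {s : S // s ≠ sstar} ℝ)
    (hA : ∀ ρhat (s s' : {s : S // s ≠ sstar}),
      A ρhat s s' = Real.exp (η * (R s - ρhat)) * P s s')
    (c : ℝ → {s : S // s ≠ sstar} → ℝ)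
    (hc : ∀ ρhat (s : {s : S // s ≠ sstar}),
      c ρhat s = Real.exp (η * (R s - ρhat)) * P s sstar)
    (z : S → ℝ) (hz0 : ∀ s, 0 ≤ z s) (hzstar : z sstar = 1)
    (ρ : ℝ)
    (hz : ∀ s, Real.exp (η * ρ) * z s = Real.exp (η * R s) * ∑ s', P s s' * z s')
    (ρhat : ℝ) (hρ : ρ < ρhat) :
    (∀ s : {s : S // s ≠ sstar},
      Summable (fun n : ℕ => ((A ρhat) ^ n *ᵥ c ρhat) s)) ∧
    (∀ s : {s : S // s ≠ sstar},
      (∑' n : ℕ, ((A ρhat) ^ n *ᵥ c ρhat) s) ≤ z s) ∧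
    (Real.exp (η * R sstar) *
        ((∑ s : {s : S // s ≠ sstar},
            P sstar s * ∑' n : ℕ, ((A ρhat) ^ n *ᵥ c ρhat) s) + P sstar sstar)
      < Real.exp (η * ρhat)) := by
  set M := A ρhat with hM
  set v := c ρhat with hv
  set β := Real.exp (η * (ρ - ρhat)) with hβ
  have hβ0 : 0 < β := Real.exp_pos _
  have hβ1 : β < 1 := by
    rw [hβ]
    have h1 : η * (ρ - ρhat) < 0 := mul_neg_of_pos_of_neg hη (by linarith)
    calc Real.exp (η * (ρ - ρhat)) < Real.exp 0 := Real.exp_lt_exp.2 h1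
    _ = 1 := Real.exp_zero
  have hAnn : ∀ s s' : {s : S // s ≠ sstar}, 0 ≤ M s s' := fun s s' => by
    rw [hM, hA]; exact mul_nonneg (Real.exp_pos _).le (hP0 _ _)
  have hvnn : ∀ s : {s : S // s ≠ sstar}, 0 ≤ v s := fun s => by
    rw [hv, hc]; exact mul_nonneg (Real.exp_pos _).le (hP0 _ _)
  -- key supersolution identity: (M *ᵥ z') s + v s = β * z s
  have hsuper : ∀ s : {s : S // s ≠ sstar},
      (M *ᵥ fun t : {s : S // s ≠ sstar} => z t) s + v s = β * z s := by
    intro s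
    have hsplit : ∑ s', P s s' * z s'
        = P s sstar * z sstar + ∑ s' : {s : S // s ≠ sstar}, P s (s' : S) * z s' :=
      sum_split_ne sstar (fun s' => P s s' * z s')
    have hE : Real.exp (η * R (s : S)) ≠ 0 := (Real.exp_pos _).ne'
    have e2 : Real.exp (η * (R s - ρhat)) * Real.exp (η * ρ)
        = Real.exp (η * R (s : S)) * β := by
      rw [hβ, ← Real.exp_add, ← Real.exp_add]; ring_nf
    have hkey : Real.exp (η * (R s - ρhat)) * ∑ s', P s s' * z s' = β * z s := by
      apply mul_left_cancel₀ hE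
      calc Real.exp (η * R (s : S)) * (Real.exp (η * (R s - ρhat)) * ∑ s', P s s' * z s')
          = Real.exp (η * (R s - ρhat)) * (Real.exp (η * R (s : S)) * ∑ s', P s s' * z s') := by
            ring
        _ = Real.exp (η * (R s - ρhat)) * (Real.exp (η * ρ) * z s) := by rw [← hz s]
        _ = (Real.exp (η * (R s - ρhat)) * Real.exp (η * ρ)) * z s := by ring
        _ = Real.exp (η * R (s : S)) * (β * z s) := by rw [e2]; ring
    calc (M *ᵥ fun t : {s : S // s ≠ sstar} => z t) s + v s
        = (∑ s' : {s : S // s ≠ sstar}, Real.exp (η * (R s - ρhat)) * P s (s' : S) * z s')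
          + Real.exp (η * (R s - ρhat)) * P s sstar := by
          simp only [Matrix.mulVec, dotProduct, hM, hA, hv, hc]
      _ = Real.exp (η * (R s - ρhat)) *
          (P s sstar * z sstar + ∑ s' : {s : S // s ≠ sstar}, P s (s' : S) * z s') := by
          rw [hzstar, mul_one, mul_add, Finset.mul_sum, add_comm]
          congr 1
          exact Finset.sum_congr rfl fun i _ => by ring
      _ = Real.exp (η * (R s - ρhat)) * ∑ s', P s s' * z s' := by rw [hsplit]
      _ = β * z s := hkey
  have hMz_nn : ∀ s : {s : S // s ≠ sstar},
      0 ≤ (M *ᵥ fun t : {s : S // s ≠ sstar} => z t) s := by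
    intro s
    apply Finset.sum_nonneg
    intro i _
    exact mul_nonneg (hAnn s i) (hz0 i)
  have hv_le : ∀ s : {s : S // s ≠ sstar}, v s ≤ β * z s := fun s => by
    have h := hsuper s; nlinarith [hMz_nn s]
  have hMz_le : ∀ s : {s : S // s ≠ sstar},
      (M *ᵥ fun t : {s : S // s ≠ sstar} => z t) s ≤ β * z s := fun s => by
    have h := hsuper s; nlinarith [hvnn s]
  -- monotonicity of M *ᵥ
  have hmono : ∀ (u w : {s : S // s ≠ sstar} → ℝ), (∀ s, u s ≤ w s) →
      ∀ s, (M *ᵥ u) s ≤ (M *ᵥ w) s := by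
    intro u w huw s
    apply Finset.sum_le_sum
    intro i _
    exact mul_le_mul_of_nonneg_left (huw i) (hAnn s i)
  have hstep : ∀ n : ℕ, (M ^ (n + 1) *ᵥ v) = M *ᵥ (M ^ n *ᵥ v) := fun n => by
    rw [Matrix.mulVec_mulVec, ← pow_succ']
  -- termwise bounds
  have hterm : ∀ n : ℕ, ∀ s : {s : S // s ≠ sstar},
      0 ≤ (M ^ n *ᵥ v) s ∧ (M ^ n *ᵥ v) s ≤ β ^ (n + 1) * z s := by
    intro n
    induction n with
    | zero =>
      intro s
      simp only [pow_zero, Matrix.one_mulVec, zero_add, pow_one]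
      exact ⟨hvnn s, hv_le s⟩
    | succ n ih =>
      intro s
      rw [hstep n]
      constructor
      · apply Finset.sum_nonneg
        intro i _
        exact mul_nonneg (hAnn s i) (ih i).1
      · calc (M *ᵥ (M ^ n *ᵥ v)) s
            ≤ (M *ᵥ fun t : {s : S // s ≠ sstar} => β ^ (n + 1) * z t) s :=
              hmono _ _ (fun t => (ih t).2) s
          _ = β ^ (n + 1) * (M *ᵥ fun t : {s : S // s ≠ sstar} => z t) s := by
              simp only [Matrix.mulVec, dotProduct, Finset.mul_sum]
              apply Finset.sum_congr rfl
              intro i _; ring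
          _ ≤ β ^ (n + 1) * (β * z s) :=
              mul_le_mul_of_nonneg_left (hMz_le s) (by positivity)
          _ = β ^ (n + 1 + 1) * z s := by ring
  -- summability
  have hsummable : ∀ s : {s : S // s ≠ sstar}, Summable (fun n : ℕ => (M ^ n *ᵥ v) s) := by
    intro s
    apply Summable.of_nonneg_of_le (fun n => (hterm n s).1) (fun n => (hterm n s).2)
    have hg : Summable (fun n : ℕ => β ^ n) :=
      summable_geometric_of_lt_one hβ0.le hβ1
    exact ((hg.mul_left β).mul_right (z s)).congr (fun n => by ring)
  -- partial sums bound
  have hpartial : ∀ N : ℕ, ∀ s : {s : S // s ≠ sstar},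
      ∑ n ∈ Finset.range N, (M ^ n *ᵥ v) s ≤ z s := by
    intro N
    induction N with
    | zero => intro s; simpa using hz0 s
    | succ N ih =>
      intro s
      have hshift : ∑ n ∈ Finset.range (N + 1), (M ^ n *ᵥ v) s
          = v s + (M *ᵥ fun t : {s : S // s ≠ sstar} =>
              ∑ n ∈ Finset.range N, (M ^ n *ᵥ v) t) s := by
        rw [Finset.sum_range_succ' (fun n => (M ^ n *ᵥ v) s)]
        simp only [pow_zero, Matrix.one_mulVec, hstep]
        rw [add_comm]
        congr 1
        simp only [Matrix.mulVec, dotProduct, Finset.mul_sum]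
        rw [Finset.sum_comm]
      rw [hshift]
      have h2 : (M *ᵥ fun t : {s : S // s ≠ sstar} =>
            ∑ n ∈ Finset.range N, (M ^ n *ᵥ v) t) s
          ≤ (M *ᵥ fun t : {s : S // s ≠ sstar} => z t) s := hmono _ _ ih s
      have h3 := hsuper s
      nlinarith [mul_nonneg (sub_nonneg.2 hβ1.le) (hz0 (s : S))]
  have htsum_le : ∀ s : {s : S // s ≠ sstar}, (∑' n : ℕ, (M ^ n *ᵥ v) s) ≤ z s := fun s =>
    Real.tsum_le_of_sum_range_le (fun n => (hterm n s).1) (fun N => hpartial N s)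
  have htsum_nn : ∀ s : {s : S // s ≠ sstar}, 0 ≤ ∑' n : ℕ, (M ^ n *ᵥ v) s := fun s =>
    tsum_nonneg (fun n => (hterm n s).1)
  refine ⟨hsummable, htsum_le, ?_⟩
  -- final strict inequality
  have hsum_le : (∑ s : {s : S // s ≠ sstar}, P sstar s * ∑' n : ℕ, (M ^ n *ᵥ v) s)
      + P sstar sstar ≤ ∑ s', P sstar s' * z s' := by
    calc (∑ s : {s : S // s ≠ sstar}, P sstar s * ∑' n : ℕ, (M ^ n *ᵥ v) s) + P sstar sstar
        ≤ (∑ s : {s : S // s ≠ sstar}, P sstar s * z s) + P sstar sstar * z sstar := by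
          rw [hzstar, mul_one]
          exact add_le_add_left (Finset.sum_le_sum fun s _ =>
            mul_le_mul_of_nonneg_left (htsum_le s) (hP0 _ _)) _
      _ = ∑ s', P sstar s' * z s' := by
          rw [sum_split_ne sstar (fun s' => P sstar s' * z s')]
          ring
  have hfin : Real.exp (η * R sstar) * ∑ s', P sstar s' * z s' = Real.exp (η * ρ) := by
    rw [← hz sstar, hzstar, mul_one]
  calc Real.exp (η * R sstar) *
        ((∑ s : {s : S // s ≠ sstar}, P sstar s * ∑' n : ℕ, (M ^ n *ᵥ v) s) + P sstar sstar)
      ≤ Real.exp (η * R sstar) * ∑ s', P sstar s' * z s' :=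
        mul_le_mul_of_nonneg_left hsum_le (Real.exp_pos _).le
    _ = Real.exp (η * ρ) := hfin
    _ < Real.exp (η * ρhat) := Real.exp_lt_exp.2 (by nlinarith)
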